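/- arXiv:1611.07451 — 6 statements merged into one kernel-verified Lean document; each statement's English description precedes it below -/
import Mathlib

section
/- If X is a non-singular square matrix, A is a symmetric matrix, and P is the orthogonal projection onto the complement of the null space of X A X^T, then the Moore–Penrose pseudoinverse satisfies (X A X^T)^+ = P X^{-T} A^+ X^{-1} P. -/
open Matrix

/-- `B` is the Moore–Penrose pseudoinverse of `A`. -/
def IsMoorePenrose {n : Type*} [Fintype n] [DecidableEq n] (A B : Matrix n n ℝ) : Prop :=
  A * B * A = A ∧ B * A * B = B ∧ (A * B)ᵀ = A * B ∧ (B * A)ᵀ = B * A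

section Aux

variable {n : Type*} [Fintype n] [DecidableEq n]

lemma mp_unique {A B C : Matrix n n ℝ} (hB : IsMoorePenrose A B)
    (hC : IsMoorePenrose A C) : B = C := by
  obtain ⟨hB1, hB2, hB3, hB4⟩ := hB
  obtain ⟨hC1, hC2, hC3, hC4⟩ := hC
  have e1 : A * B = A * C := by
    calc A * B = (A * B)ᵀ := hB3.symm
    _ = ((A * C * A) * B)ᵀ := by rw [hC1]
    _ = ((A * C) * (A * B))ᵀ := by simp only [Matrix.mul_assoc]
    _ = (A * B)ᵀ * (A * C)ᵀ := by rw [Matrix.transpose_mul]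
    _ = (A * B) * (A * C) := by rw [hB3, hC3]
    _ = (A * B * A) * C := by simp only [Matrix.mul_assoc]
    _ = A * C := by rw [hB1]
  have e2 : B * A = C * A := by
    calc B * A = (B * A)ᵀ := hB4.symm
    _ = (B * (A * C * A))ᵀ := by rw [hC1]
    _ = ((B * A) * (C * A))ᵀ := by simp only [Matrix.mul_assoc]
    _ = (C * A)ᵀ * (B * A)ᵀ := by rw [Matrix.transpose_mul]
    _ = (C * A) * (B * A) := by rw [hB4, hC4]
    _ = C * (A * B * A) := by simp only [Matrix.mul_assoc]
    _ = C * A := by rw [hB1]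
  calc B = B * A * B := hB2.symm
  _ = B * (A * C) := by rw [Matrix.mul_assoc, e1]
  _ = (C * A) * C := by rw [← Matrix.mul_assoc, e2]
  _ = C := hC2

lemma mp_symm {A B : Matrix n n ℝ} (hA : Aᵀ = A) (hB : IsMoorePenrose A B) :
    Bᵀ = B := by
  have h1 := hB.1
  have h2 := hB.2.1
  have h3 := hB.2.2.1
  have h4 := hB.2.2.2
  refine mp_unique (A := A) ?_ hB
  refine ⟨?_, ?_, ?_, ?_⟩
  · have : (A * B * A)ᵀ = Aᵀ := by rw [h1]
    rw [Matrix.transpose_mul, Matrix.transpose_mul, hA] at this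
    rw [← Matrix.mul_assoc] at this
    exact this
  · have : (B * A * B)ᵀ = Bᵀ := by rw [h2]
    rw [Matrix.transpose_mul, Matrix.transpose_mul, hA] at this
    rw [← Matrix.mul_assoc] at this
    exact this
  · calc (A * Bᵀ)ᵀ = Bᵀᵀ * Aᵀ := by rw [Matrix.transpose_mul]
    _ = B * A := by rw [Matrix.transpose_transpose, hA]
    _ = (B * A)ᵀ := h4.symm
    _ = Aᵀ * Bᵀ := by rw [Matrix.transpose_mul]
    _ = A * Bᵀ := by rw [hA]
  · calc (Bᵀ * A)ᵀ = Aᵀ * Bᵀᵀ := by rw [Matrix.transpose_mul]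
    _ = A * B := by rw [Matrix.transpose_transpose, hA]
    _ = (A * B)ᵀ := h3.symm
    _ = Bᵀ * Aᵀ := by rw [Matrix.transpose_mul]
    _ = Bᵀ * A := by rw [hA]

lemma ext_of_mulVec {A B : Matrix n n ℝ} (h : ∀ v, A.mulVec v = B.mulVec v) :
    A = B := by
  ext i j
  have := congrFun (h (Pi.single j 1)) i
  simpa using this

lemma proj_unique {P Q : Matrix n n ℝ} (hPs : Pᵀ = P) (hPi : P * P = P)
    (hQs : Qᵀ = Q) (hQi : Q * Q = Q)
    (h : LinearMap.range P.mulVecLin = LinearMap.range Q.mulVecLin) : P = Q := by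
  have fixP : ∀ v ∈ LinearMap.range P.mulVecLin, P.mulVec v = v := by
    rintro v ⟨w, rfl⟩
    simp only [Matrix.mulVecLin_apply, Matrix.mulVec_mulVec, hPi]
  have fixQ : ∀ v ∈ LinearMap.range Q.mulVecLin, Q.mulVec v = v := by
    rintro v ⟨w, rfl⟩
    simp only [Matrix.mulVecLin_apply, Matrix.mulVec_mulVec, hQi]
  have hPQ : P * Q = Q := by
    apply ext_of_mulVec
    intro v
    rw [← Matrix.mulVec_mulVec]
    exact fixP _ (by rw [h]; exact ⟨v, Matrix.mulVecLin_apply _ _⟩)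
  have hQP : Q * P = P := by
    apply ext_of_mulVec
    intro v
    rw [← Matrix.mulVec_mulVec]
    exact fixQ _ (by rw [← h]; exact ⟨v, Matrix.mulVecLin_apply _ _⟩)
  calc P = Q * P := hQP.symm
  _ = (Pᵀ * Qᵀ)ᵀ := by
      rw [Matrix.transpose_mul, Matrix.transpose_transpose, Matrix.transpose_transpose]
  _ = (P * Q)ᵀ := by rw [hPs, hQs]
  _ = Qᵀ := by rw [hPQ]
  _ = Q := hQs

end Aux

theorem stmt1 {n : Type*} [Fintype n] [DecidableEq n]
    (X A : Matrix n n ℝ) (hX : IsUnit X.det) (hA : Aᵀ = A)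
    (P : Matrix n n ℝ) (hPsymm : Pᵀ = P) (hPidem : P * P = P)
    (hPrange : LinearMap.range P.mulVecLin = LinearMap.range (X * A * Xᵀ).mulVecLin)
    (Ap : Matrix n n ℝ) (hAp : IsMoorePenrose A Ap)
    (Mp : Matrix n n ℝ) (hMp : IsMoorePenrose (X * A * Xᵀ) Mp) :
    Mp = P * (X⁻¹)ᵀ * Ap * X⁻¹ * P := by
  set M := X * A * Xᵀ with hM
  have hXl : X⁻¹ * X = 1 := Matrix.nonsing_inv_mul X hX
  have hXr : X * X⁻¹ = 1 := Matrix.mul_nonsing_inv X hX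
  have hXtl : Xᵀ * (X⁻¹)ᵀ = 1 := by rw [← Matrix.transpose_mul, hXl, Matrix.transpose_one]
  have hXtr : (X⁻¹)ᵀ * Xᵀ = 1 := by rw [← Matrix.transpose_mul, hXr, Matrix.transpose_one]
  have hMs : Mᵀ = M := by
    rw [hM, Matrix.transpose_mul, Matrix.transpose_mul, Matrix.transpose_transpose, hA,
      Matrix.mul_assoc]
  obtain ⟨hA1, hA2, hA3, hA4⟩ := hAp
  have hMps : Mpᵀ = Mp := mp_symm hMs hMp
  obtain ⟨hM1, hM2, hM3, hM4⟩ := hMp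
  have hcomm : Mp * M = M * Mp := by
    calc Mp * M = (Mᵀ * Mpᵀ)ᵀ := by
          rw [Matrix.transpose_mul, Matrix.transpose_transpose, Matrix.transpose_transpose]
    _ = (M * Mp)ᵀ := by rw [hMs, hMps]
    _ = M * Mp := hM3
  have hP : P = M * Mp := by
    apply proj_unique hPsymm hPidem hM3 ?_ ?_
    · calc M * Mp * (M * Mp) = (M * Mp * M) * Mp := by simp only [Matrix.mul_assoc]
      _ = M * Mp := by rw [hM1]
    · rw [hPrange]
      apply le_antisymm
      · rintro v ⟨w, rfl⟩
        refine ⟨M.mulVec w, ?_⟩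
        simp only [Matrix.mulVecLin_apply, Matrix.mulVec_mulVec]
        rw [hM1]
      · rw [Matrix.mulVecLin_mul]
        exact LinearMap.range_comp_le_range _ _
  have hPM : P * M = M := by rw [hP, Matrix.mul_assoc, ← Matrix.mul_assoc, hM1]
  have hMP : M * P = M := by rw [hP, ← hcomm, ← Matrix.mul_assoc, hM1]
  set B := P * (X⁻¹)ᵀ * Ap * X⁻¹ * P with hB
  have hMB : M * B = P := by
    calc M * B = (M * P) * ((X⁻¹)ᵀ * (Ap * (X⁻¹ * P))) := by
          rw [hB]; simp only [Matrix.mul_assoc]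
    _ = M * ((X⁻¹)ᵀ * (Ap * (X⁻¹ * P))) := by rw [hMP]
    _ = X * (A * ((Xᵀ * (X⁻¹)ᵀ) * (Ap * (X⁻¹ * P)))) := by
          simp only [hM, Matrix.mul_assoc]
    _ = X * (A * (Ap * (X⁻¹ * P))) := by rw [hXtl, Matrix.one_mul]
    _ = X * (A * (Ap * (X⁻¹ * (M * Mp)))) := by rw [hP]
    _ = X * (A * (Ap * ((X⁻¹ * X) * (A * (Xᵀ * Mp))))) := by
          simp only [hM, Matrix.mul_assoc]
    _ = X * (A * (Ap * (A * (Xᵀ * Mp)))) := by rw [hXl, Matrix.one_mul]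
    _ = X * ((A * Ap * A) * (Xᵀ * Mp)) := by simp only [Matrix.mul_assoc]
    _ = X * (A * (Xᵀ * Mp)) := by rw [hA1]
    _ = M * Mp := by simp only [hM, Matrix.mul_assoc]
    _ = P := hP.symm
  have hBM : B * M = P := by
    calc B * M = (P * (X⁻¹)ᵀ * Ap * X⁻¹) * (P * M) := by
          rw [hB]; simp only [Matrix.mul_assoc]
    _ = (P * (X⁻¹)ᵀ * Ap * X⁻¹) * M := by rw [hPM]
    _ = P * ((X⁻¹)ᵀ * (Ap * ((X⁻¹ * X) * (A * Xᵀ)))) := by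
          simp only [hM, Matrix.mul_assoc]
    _ = P * ((X⁻¹)ᵀ * (Ap * (A * Xᵀ))) := by rw [hXl, Matrix.one_mul]
    _ = (M * Mp) * ((X⁻¹)ᵀ * (Ap * (A * Xᵀ))) := by rw [hP]
    _ = (Mp * M) * ((X⁻¹)ᵀ * (Ap * (A * Xᵀ))) := by rw [hcomm]
    _ = Mp * (X * (A * ((Xᵀ * (X⁻¹)ᵀ) * (Ap * (A * Xᵀ))))) := by
          simp only [hM, Matrix.mul_assoc]
    _ = Mp * (X * (A * (Ap * (A * Xᵀ)))) := by rw [hXtl, Matrix.one_mul]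
    _ = Mp * (X * ((A * Ap * A) * Xᵀ)) := by simp only [Matrix.mul_assoc]
    _ = Mp * (X * (A * Xᵀ)) := by rw [hA1]
    _ = Mp * M := by simp only [hM, Matrix.mul_assoc]
    _ = P := by rw [hcomm, ← hP]
  have hBmp : IsMoorePenrose M B := by
    refine ⟨?_, ?_, ?_, ?_⟩
    · rw [hMB, hPM]
    · rw [hBM]
      calc P * B = (P * P) * ((X⁻¹)ᵀ * (Ap * (X⁻¹ * P))) := by
            rw [hB]; simp only [Matrix.mul_assoc]
      _ = P * ((X⁻¹)ᵀ * (Ap * (X⁻¹ * P))) := by rw [hPidem]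
      _ = B := by rw [hB]; simp only [Matrix.mul_assoc]
    · rw [hMB]; exact hPsymm
    · rw [hBM]; exact hPsymm
  exact mp_unique ⟨hM1, hM2, hM3, hM4⟩ hBmp
end

section
/- Let L be the Laplacian of a graph, v a vertex with degree d = L(v,v) > 0. Then the matrix C_v(L) = Star_v(L) - (1/L(v,v)) L(:,v) L(:,v)^T is a graph Laplacian, equal to the weighted Laplacian of the clique on the neighbors of v with edge weights w(v,i)w(v,j)/d. -/
open Matrix

/-- The weighted Laplacian of the weight function `w`. -/
def lapW {V : Type*} [Fintype V] [DecidableEq V] (w : V → V → ℝ) : Matrix V V ℝ :=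
  Matrix.of fun i j => if i = j then ∑ k, w i k else - w i j

theorem stmt2 {V : Type*} [Fintype V] [DecidableEq V] (w : V → V → ℝ)
    (hsymm : ∀ i j, w i j = w j i) (hnn : ∀ i j, 0 ≤ w i j) (hdiag : ∀ i, w i i = 0)
    (v : V) (hd : 0 < lapW w v v) :
    lapW (fun i j => if i = v ∨ j = v then w i j else 0) -
        (1 / lapW w v v) • Matrix.of (fun i j => lapW w i v * lapW w j v) =
      lapW (fun i j => if i = v ∨ j = v ∨ i = j then 0 else w v i * w v j / lapW w v v) := by
  have hdv : lapW w v v = ∑ k, w v k := by simp [lapW]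
  set d : ℝ := ∑ k, w v k with hdef
  rw [hdv] at hd ⊢
  have hd0 : d ≠ 0 := ne_of_gt hd
  ext i j
  simp only [Matrix.sub_apply, Matrix.smul_apply, Matrix.of_apply, lapW, smul_eq_mul, hdv]
  by_cases hi : i = v
  · subst hi
    by_cases hj : j = i
    · subst hj
      simp [hdef.symm, hd0]
    · simp [hj, Ne.symm hj, hsymm i j, hdef.symm, hd0]
  · by_cases hj : j = v
    · subst hj
      simp [hi, Ne.symm hi, hdef.symm, hd0, hsymm i j]
      field_simp
      ring
    · by_cases hij : i = j
      · subst hij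
        simp [hi, hdef.symm]
        have h2 : (∑ k, if k = v ∨ i = k then 0 else w v i * w v k / d) =
            ∑ k, (w v i * w v k / d - if k = i then w v i * w v k / d else 0) := by
          refine Finset.sum_congr rfl (fun k _ => ?_)
          by_cases hkv : k = v
          · subst hkv; simp [Ne.symm hi, hdiag, hi]
          · by_cases hki : k = i
            · subst hki; simp
            · simp [hkv, hki, Ne.symm hki]
        rw [h2, Finset.sum_sub_distrib, Finset.sum_ite_eq' Finset.univ i]
        simp only [Finset.mem_univ, if_true]
        have h3 : ∑ k, w v i * w v k / d = w v i * d / d := by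
          rw [← Finset.sum_div, ← Finset.mul_sum]
        rw [h3]
        field_simp
        rw [hsymm i v]
      · simp [hi, hj, hij, Ne.symm hij, hdef.symm]
        field_simp
        rw [hsymm i v, hsymm j v]
end

section
/- Let L be a connected graph Laplacian on vertex set V, F ⊆ V, C = V \ F, and S the Schur complement of L with respect to elimination of F. If x = (0_F; x_C) is orthogonal to the all-ones vector, then x^T L^+ x = x_C^T S^+ x_C. In particular, effective resistances between vertices of C are preserved by taking the Schur complement onto C. -/
open Matrix

/-- The Schur complement of `L` onto the vertices satisfying `p`, eliminating the rest. -/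
noncomputable def schurOn {V : Type*} [Fintype V] [DecidableEq V] (L : Matrix V V ℝ)
    (p : V → Prop) [DecidablePred p] : Matrix {i // p i} {i // p i} ℝ :=
  L.submatrix (Subtype.val : {i // p i} → V) (Subtype.val : {i // p i} → V) -
    L.submatrix (Subtype.val : {i // p i} → V) (Subtype.val : {i // ¬ p i} → V) *
      (L.submatrix (Subtype.val : {i // ¬ p i} → V) (Subtype.val : {i // ¬ p i} → V))⁻¹ *
      L.submatrix (Subtype.val : {i // ¬ p i} → V) (Subtype.val : {i // p i} → V)

section aux

set_option linter.unusedSectionVars false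

variable {V : Type*} [Fintype V] [DecidableEq V]

lemma lapW_transpose (w : V → V → ℝ) (hsymm : ∀ i j, w i j = w j i) :
    (lapW w)ᵀ = lapW w := by
  ext i j
  simp only [transpose_apply, lapW, of_apply]
  by_cases h : i = j
  · subst h; simp
  · simp [h, Ne.symm h, hsymm i j]

lemma lapW_mulVec_apply (w : V → V → ℝ) (hdiag : ∀ i, w i i = 0) (v : V → ℝ) (i : V) :
    (lapW w *ᵥ v) i = ∑ j, w i j * (v i - v j) := by
  simp only [mulVec, dotProduct, lapW, of_apply]
  rw [← Finset.add_sum_erase _ _ (Finset.mem_univ i), if_pos rfl]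
  rw [← Finset.add_sum_erase _ (fun j => w i j * (v i - v j)) (Finset.mem_univ i)]
  rw [hdiag i]
  have h1 : ∀ j ∈ Finset.univ.erase i,
      (if i = j then ∑ k, w i k else -w i j) * v j = -(w i j * v j) := by
    intro j hj
    rw [if_neg (fun h => (Finset.mem_erase.mp hj).1 h.symm)]
    ring
  rw [Finset.sum_congr rfl h1, Finset.sum_neg_distrib]
  have h2 : ∑ j ∈ Finset.univ.erase i, w i j * (v i - v j)
      = (∑ j ∈ Finset.univ.erase i, w i j) * v i - ∑ j ∈ Finset.univ.erase i, w i j * v j := by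
    rw [Finset.sum_mul, ← Finset.sum_sub_distrib]
    exact Finset.sum_congr rfl fun j _ => by ring
  rw [h2]
  have h3 : ∑ j ∈ Finset.univ.erase i, w i j = ∑ j, w i j :=
    Finset.sum_erase _ (hdiag i)
  rw [h3]; ring

lemma lapW_ker (w : V → V → ℝ) (hsymm : ∀ i j, w i j = w j i) (hnn : ∀ i j, 0 ≤ w i j)
    (hdiag : ∀ i, w i i = 0)
    (hconn : (SimpleGraph.fromRel fun i j => w i j ≠ 0).Connected)
    (v : V → ℝ) (hv : lapW w *ᵥ v = 0) : ∃ c, v = fun _ => c := by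
  have key : ∀ i, ∑ j, w i j * (v i - v j) = 0 := by
    intro i; rw [← lapW_mulVec_apply w hdiag v i, hv]; rfl
  have hq : ∑ i, ∑ j, w i j * (v i - v j) ^ 2 = 0 := by
    have expand : ∀ i j, w i j * (v i - v j) ^ 2
        = w i j * (v i - v j) * v i - w i j * (v i - v j) * v j := fun i j => by ring
    simp only [expand, Finset.sum_sub_distrib]
    have e1 : ∑ i, ∑ j, w i j * (v i - v j) * v i = 0 := by
      refine Finset.sum_eq_zero fun i _ => ?_
      have : ∑ j, w i j * (v i - v j) * v i = (∑ j, w i j * (v i - v j)) * v i := by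
        rw [Finset.sum_mul]
      rw [this, key i, zero_mul]
    have e2 : ∑ i, ∑ j, w i j * (v i - v j) * v j = 0 := by
      rw [Finset.sum_comm]
      refine Finset.sum_eq_zero fun j _ => ?_
      have : ∑ i, w i j * (v i - v j) * v j = (-(∑ i, w j i * (v j - v i))) * v j := by
        rw [neg_mul, Finset.sum_mul, ← Finset.sum_neg_distrib]
        exact Finset.sum_congr rfl fun i _ => by rw [hsymm i j]; ring
      rw [this, key j, neg_zero, zero_mul]
    rw [e1, e2, sub_zero]
  have hterm : ∀ i j, w i j ≠ 0 → v i = v j := by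
    intro i j hw
    have h1 : ∀ i ∈ Finset.univ (α := V), (0:ℝ) ≤ ∑ j, w i j * (v i - v j) ^ 2 :=
      fun i _ => Finset.sum_nonneg fun j _ => mul_nonneg (hnn i j) (sq_nonneg _)
    have h2 := (Finset.sum_eq_zero_iff_of_nonneg h1).mp hq i (Finset.mem_univ i)
    have h3 : ∀ j ∈ Finset.univ (α := V), (0:ℝ) ≤ w i j * (v i - v j) ^ 2 :=
      fun j _ => mul_nonneg (hnn i j) (sq_nonneg _)
    have h4 := (Finset.sum_eq_zero_iff_of_nonneg h3).mp h2 j (Finset.mem_univ j)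
    rcases mul_eq_zero.mp h4 with h | h
    · exact absurd h hw
    · have := pow_eq_zero_iff (n := 2) (by norm_num) |>.mp h
      linarith [sub_eq_zero.mp this]
  have hall : ∀ i j, v i = v j := by
    intro i j
    obtain ⟨wk⟩ := hconn.preconnected i j
    induction wk with
    | nil => rfl
    | cons h _ ih =>
      rw [SimpleGraph.fromRel_adj] at h
      rcases h.2 with hw | hw
      · exact (hterm _ _ hw).trans ih
      · exact ((hterm _ _ hw).symm.trans ih)
  have : Nonempty V := hconn.nonempty
  obtain ⟨i0⟩ := this
  exact ⟨v i0, funext fun i => hall i i0⟩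

lemma pinv_fix {n : Type*} [Fintype n] [DecidableEq n] {A B : Matrix n n ℝ} (hA : Aᵀ = A)
    (h : IsMoorePenrose A B) {x : n → ℝ} (hx : ∀ v, A *ᵥ v = 0 → x ⬝ᵥ v = 0) :
    A *ᵥ (B *ᵥ x) = x := by
  obtain ⟨h1, h2, h3, h4⟩ := h
  have hAAB : A * (A * B) = A := by
    have := congrArg Matrix.transpose h1
    rw [transpose_mul, h3, hA] at this
    exact this
  set u := x - (A * B) *ᵥ x with hu
  have hAu : A *ᵥ u = 0 := by
    rw [hu, mulVec_sub, mulVec_mulVec, hAAB, sub_self]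
  have h5 : x ⬝ᵥ u = 0 := hx u hAu
  have h6 : ((A * B) *ᵥ x) ⬝ᵥ u = 0 := by
    rw [dotProduct_comm, dotProduct_mulVec, ← mulVec_transpose, transpose_mul, hA]
    have h0 : (Bᵀ * A) *ᵥ u = 0 := by rw [← mulVec_mulVec, hAu, mulVec_zero]
    rw [h0, zero_dotProduct]
  have h7 : u ⬝ᵥ u = 0 := by
    rw [hu] at h5 h6 ⊢
    rw [sub_dotProduct, h5, h6, sub_zero]
  have h8 : u = 0 := dotProduct_self_eq_zero.mp h7
  have : (A * B) *ᵥ x = x := by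
    have := sub_eq_zero.mp h8
    exact this.symm
  rw [mulVec_mulVec, this]

lemma mulVec_block_apply (L : Matrix V V ℝ) (p : V → Prop) [DecidablePred p]
    (u : V → ℝ) (i : V) :
    (L *ᵥ u) i = (∑ j : {j // p j}, L i j * u j) + ∑ j : {j // ¬ p j}, L i j * u j :=
  (Fintype.sum_subtype_add_sum_subtype p fun j => L i j * u j).symm

lemma schur_mulVec (L : Matrix V V ℝ) (p : V → Prop) [DecidablePred p]
    (hFF : IsUnit (L.submatrix (Subtype.val : {i // ¬ p i} → V)
      (Subtype.val : {i // ¬ p i} → V)).det)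
    (u : V → ℝ) (hu : ∀ i : {i // ¬ p i}, (L *ᵥ u) ↑i = 0) :
    schurOn L p *ᵥ (fun i : {i // p i} => u ↑i) = fun i : {i // p i} => (L *ᵥ u) ↑i := by
  set A := L.submatrix (Subtype.val : {i // ¬ p i} → V) (Subtype.val : {i // ¬ p i} → V)
  set LFC := L.submatrix (Subtype.val : {i // ¬ p i} → V) (Subtype.val : {i // p i} → V)
  set LCF := L.submatrix (Subtype.val : {i // p i} → V) (Subtype.val : {i // ¬ p i} → V)
  set LCC := L.submatrix (Subtype.val : {i // p i} → V) (Subtype.val : {i // p i} → V)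
  set uC : {i // p i} → ℝ := fun i => u ↑i
  set uF : {i // ¬ p i} → ℝ := fun i => u ↑i
  have hF : LFC *ᵥ uC + A *ᵥ uF = 0 := by
    ext i
    have := hu i
    rw [mulVec_block_apply L p u i] at this
    exact this
  have hinv : A⁻¹ *ᵥ (LFC *ᵥ uC) = -uF := by
    have : LFC *ᵥ uC = -(A *ᵥ uF) := by
      rw [eq_neg_iff_add_eq_zero]; exact hF
    rw [this, mulVec_neg, mulVec_mulVec, Matrix.nonsing_inv_mul A hFF, one_mulVec]
  have : schurOn L p *ᵥ uC = LCC *ᵥ uC + LCF *ᵥ uF := by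
    rw [schurOn, sub_mulVec]
    have : (LCF * A⁻¹ * LFC) *ᵥ uC = LCF *ᵥ (A⁻¹ *ᵥ (LFC *ᵥ uC)) := by
      rw [mulVec_mulVec, mulVec_mulVec]
    rw [this, hinv, mulVec_neg, sub_neg_eq_add]
  rw [this]
  ext i
  rw [mulVec_block_apply L p u ↑i]
  rfl

lemma schur_transpose (L : Matrix V V ℝ) (hL : Lᵀ = L) (p : V → Prop) [DecidablePred p] :
    (schurOn L p)ᵀ = schurOn L p := by
  simp only [schurOn, transpose_sub, transpose_mul, transpose_submatrix,
    Matrix.transpose_nonsing_inv, hL, Matrix.mul_assoc]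

lemma schur_ker (w : V → V → ℝ) (hsymm : ∀ i j, w i j = w j i) (hnn : ∀ i j, 0 ≤ w i j)
    (hdiag : ∀ i, w i i = 0)
    (hconn : (SimpleGraph.fromRel fun i j => w i j ≠ 0).Connected)
    (p : V → Prop) [DecidablePred p]
    (hFF : IsUnit ((lapW w).submatrix (Subtype.val : {i // ¬ p i} → V)
      (Subtype.val : {i // ¬ p i} → V)).det)
    (v : {i // p i} → ℝ) (hv : schurOn (lapW w) p *ᵥ v = 0) : ∃ c, v = fun _ => c := by
  set L := lapW w with hLdef
  set A := L.submatrix (Subtype.val : {i // ¬ p i} → V) (Subtype.val : {i // ¬ p i} → V)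
  set LFC := L.submatrix (Subtype.val : {i // ¬ p i} → V) (Subtype.val : {i // p i} → V)
  set uF : {i // ¬ p i} → ℝ := -((A⁻¹ * LFC) *ᵥ v) with huFdef
  set u : V → ℝ := fun i => if h : p i then v ⟨i, h⟩ else uF ⟨i, h⟩ with hudef
  have huC : (fun j : {j // p j} => u ↑j) = v := by
    funext j; simp [hudef, j.2]
  have huF : (fun j : {j // ¬ p j} => u ↑j) = uF := by
    funext j; simp [hudef, j.2]
  have hu : ∀ i : {i // ¬ p i}, (L *ᵥ u) ↑i = 0 := by
    intro i
    rw [mulVec_block_apply L p u ↑i]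
    have e1 : ∑ j : {j // p j}, L ↑i ↑j * u ↑j = (LFC *ᵥ v) i :=
      Finset.sum_congr rfl fun j _ => by rw [congrFun huC j]; rfl
    have e2 : ∑ j : {j // ¬ p j}, L ↑i ↑j * u ↑j = (A *ᵥ uF) i :=
      Finset.sum_congr rfl fun j _ => by rw [congrFun huF j]; rfl
    rw [e1, e2]
    have : A *ᵥ uF = -(LFC *ᵥ v) := by
      rw [huFdef, mulVec_neg, mulVec_mulVec, ← Matrix.mul_assoc,
        Matrix.mul_nonsing_inv A hFF, Matrix.one_mul]
    rw [this]
    simp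
  have hC : ∀ i : {i // p i}, (L *ᵥ u) ↑i = 0 := by
    have := schur_mulVec L p hFF u hu
    rw [huC, hv] at this
    intro i
    exact (congrFun this i).symm
  have hLu : L *ᵥ u = 0 := by
    ext i
    by_cases h : p i
    · exact hC ⟨i, h⟩
    · exact hu ⟨i, h⟩
  obtain ⟨c, hc⟩ := lapW_ker w hsymm hnn hdiag hconn u hLu
  refine ⟨c, ?_⟩
  rw [← huC, hc]

end aux

theorem stmt6 {V : Type*} [Fintype V] [DecidableEq V] (w : V → V → ℝ)
    (hsymm : ∀ i j, w i j = w j i) (hnn : ∀ i j, 0 ≤ w i j) (hdiag : ∀ i, w i i = 0)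
    (hconn : (SimpleGraph.fromRel fun i j => w i j ≠ 0).Connected)
    (p : V → Prop) [DecidablePred p]
    (hFF : IsUnit ((lapW w).submatrix (Subtype.val : {i // ¬ p i} → V)
      (Subtype.val : {i // ¬ p i} → V)).det)
    (x : V → ℝ) (hx0 : ∀ i, ¬ p i → x i = 0) (hsum : ∑ i, x i = 0)
    (Lp : Matrix V V ℝ) (hLp : IsMoorePenrose (lapW w) Lp)
    (Sp : Matrix {i // p i} {i // p i} ℝ) (hSp : IsMoorePenrose (schurOn (lapW w) p) Sp) :
    x ⬝ᵥ Lp *ᵥ x = (fun i : {i // p i} => x ↑i) ⬝ᵥ Sp *ᵥ (fun i : {i // p i} => x ↑i) := by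
  set L := lapW w with hLdef
  set S := schurOn (lapW w) p with hSdef
  set xC : {i // p i} → ℝ := fun i => x ↑i with hxCdef
  have hLt : Lᵀ = L := lapW_transpose w hsymm
  have hSt : Sᵀ = S := schur_transpose L hLt p
  -- sum of x over C equals full sum
  have hsumC : ∑ i : {i // p i}, x ↑i = 0 := by
    have := Fintype.sum_subtype_add_sum_subtype p x
    have hF0 : ∑ i : {i // ¬ p i}, x ↑i = 0 :=
      Finset.sum_eq_zero fun i _ => hx0 ↑i i.2
    rw [hF0, add_zero, hsum] at this
    exact this
  -- kernel orthogonality for L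
  have hxker : ∀ v, L *ᵥ v = 0 → x ⬝ᵥ v = 0 := by
    intro v hv
    obtain ⟨c, hc⟩ := lapW_ker w hsymm hnn hdiag hconn v hv
    rw [hc]
    simp only [dotProduct]
    rw [← Finset.sum_mul, hsum, zero_mul]
  have hy : L *ᵥ (Lp *ᵥ x) = x := pinv_fix hLt hLp hxker
  set y := Lp *ᵥ x with hydef
  -- kernel orthogonality for S
  have hxCker : ∀ v, S *ᵥ v = 0 → xC ⬝ᵥ v = 0 := by
    intro v hv
    obtain ⟨c, hc⟩ := schur_ker w hsymm hnn hdiag hconn p hFF v hv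
    rw [hc]
    simp only [dotProduct]
    rw [← Finset.sum_mul, hxCdef, hsumC, zero_mul]
  have hz : S *ᵥ (Sp *ᵥ xC) = xC := pinv_fix hSt hSp hxCker
  set z := Sp *ᵥ xC with hzdef
  -- the C-block of y solves S yC = xC
  have hu : ∀ i : {i // ¬ p i}, (L *ᵥ y) ↑i = 0 := by
    intro i; rw [hy]; exact hx0 ↑i i.2
  have hSy : S *ᵥ (fun i : {i // p i} => y ↑i) = xC := by
    rw [hSdef, schur_mulVec L p hFF y hu]
    funext i
    rw [hy]
  set yC : {i // p i} → ℝ := fun i => y ↑i with hyCdef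
  -- z - yC is in ker S, hence constant
  have hker : S *ᵥ (z - yC) = 0 := by
    rw [mulVec_sub, hz, hSy, sub_self]
  obtain ⟨c, hc⟩ := schur_ker w hsymm hnn hdiag hconn p hFF (z - yC) hker
  -- conclude
  have hrhs : xC ⬝ᵥ z = xC ⬝ᵥ yC := by
    have h1 : z = yC + fun _ => c := by
      funext i
      have h2 := congrFun hc i
      simp only [Pi.sub_apply] at h2
      simp only [Pi.add_apply]
      linarith
    rw [h1, dotProduct_add]
    have : xC ⬝ᵥ (fun _ => c) = 0 := by
      simp only [dotProduct]
      rw [← Finset.sum_mul, hxCdef, hsumC, zero_mul]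
    rw [this, add_zero]
  have hlhs : x ⬝ᵥ y = xC ⬝ᵥ yC := by
    simp only [dotProduct]
    have := Fintype.sum_subtype_add_sum_subtype p (fun i => x i * y i)
    have hF0 : ∑ i : {i // ¬ p i}, x ↑i * y ↑i = 0 :=
      Finset.sum_eq_zero fun i _ => by rw [hx0 ↑i i.2, zero_mul]
    rw [hF0, add_zero] at this
    exact this.symm
  calc x ⬝ᵥ y = xC ⬝ᵥ yC := hlhs
    _ = xC ⬝ᵥ z := hrhs.symm
end

section
/- If A and B are symmetric positive semidefinite matrices with the same null space and e^{-ε} B ⪯ A ⪯ e^{ε} B, then e^{-ε} B^+ ⪯ A^+ ⪯ e^{ε} B^+. -/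
open Matrix

/-- `A ≈_ε B`, i.e. `e^{-ε} B ⪯ A ⪯ e^{ε} B` in the Loewner order. -/
def SpecApprox {n : Type*} [Fintype n] (ε : ℝ) (A B : Matrix n n ℝ) : Prop :=
  (A - Real.exp (-ε) • B).PosSemidef ∧ (Real.exp ε • B - A).PosSemidef

namespace MPaux

variable {n : Type*} [Fintype n] [DecidableEq n]

theorem mp_unique {A B C : Matrix n n ℝ} (hB : IsMoorePenrose A B)
    (hC : IsMoorePenrose A C) : B = C := by
  obtain ⟨b1, b2, b3, b4⟩ := hB
  obtain ⟨c1, c2, c3, c4⟩ := hC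
  have hab : A * B = A * C := by
    calc A * B = (A * C * A) * B := by rw [c1]
    _ = (A * C) * (A * B) := by noncomm_ring
    _ = (A * C)ᵀ * (A * B)ᵀ := by rw [c3, b3]
    _ = Cᵀ * (A * B * A)ᵀ := by
        simp [Matrix.transpose_mul, Matrix.mul_assoc]
    _ = Cᵀ * Aᵀ := by rw [b1]
    _ = (A * C)ᵀ := by rw [Matrix.transpose_mul]
    _ = A * C := c3
  have hba : B * A = C * A := by
    calc B * A = B * (A * C * A) := by rw [c1]
    _ = (B * A) * (C * A) := by noncomm_ring
    _ = (B * A)ᵀ * (C * A)ᵀ := by rw [b4, c4]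
    _ = (A * B * A)ᵀ * Cᵀ := by
        simp [Matrix.transpose_mul, Matrix.mul_assoc]
    _ = Aᵀ * Cᵀ := by rw [b1]
    _ = (C * A)ᵀ := by rw [Matrix.transpose_mul]
    _ = C * A := c4
  calc B = B * A * B := b2.symm
  _ = B * (A * C) := by rw [← hab, Matrix.mul_assoc]
  _ = (B * A) * C := by rw [Matrix.mul_assoc]
  _ = C * A * C := by rw [hba]
  _ = C := c2

theorem mp_symm {A Ap : Matrix n n ℝ} (hA : Aᵀ = A) (h : IsMoorePenrose A Ap) :
    Apᵀ = Ap := by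
  obtain ⟨h1, h2, h3, h4⟩ := h
  have this : IsMoorePenrose A Apᵀ := by
    refine ⟨?_, ?_, ?_, ?_⟩
    · calc A * Apᵀ * A = Aᵀ * Apᵀ * Aᵀ := by rw [hA]
      _ = (A * Ap * A)ᵀ := by simp [Matrix.transpose_mul, Matrix.mul_assoc]
      _ = Aᵀ := by rw [h1]
      _ = A := hA
    · calc Apᵀ * A * Apᵀ = Apᵀ * Aᵀ * Apᵀ := by rw [hA]
      _ = (Ap * A * Ap)ᵀ := by simp [Matrix.transpose_mul, Matrix.mul_assoc]
      _ = Apᵀ := by rw [h2]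
    · calc (A * Apᵀ)ᵀ = Ap * Aᵀ := by simp [Matrix.transpose_mul]
      _ = Ap * A := by rw [hA]
      _ = (Ap * A)ᵀ := h4.symm
      _ = Aᵀ * Apᵀ := by simp [Matrix.transpose_mul]
      _ = A * Apᵀ := by rw [hA]
    · calc (Apᵀ * A)ᵀ = Aᵀ * Ap := by simp [Matrix.transpose_mul]
      _ = A * Ap := by rw [hA]
      _ = (A * Ap)ᵀ := h3.symm
      _ = Apᵀ * Aᵀ := by simp [Matrix.transpose_mul]
      _ = Apᵀ * A := by rw [hA]
  exact mp_unique this ⟨h1, h2, h3, h4⟩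

theorem mp_comm {A Ap : Matrix n n ℝ} (hA : Aᵀ = A) (h : IsMoorePenrose A Ap) :
    A * Ap = Ap * A := by
  have hs := mp_symm hA h
  calc A * Ap = (A * Ap)ᵀ := h.2.2.1.symm
  _ = Apᵀ * Aᵀ := by simp [Matrix.transpose_mul]
  _ = Ap * A := by rw [hs, hA]

/-- range lemma: C * Cp * D = D given ker C ⊆ ker D. -/
theorem range_absorb {C Cp D : Matrix n n ℝ} (hC : Cᵀ = C) (hD : Dᵀ = D)
    (hCp : IsMoorePenrose C Cp)
    (hker : ∀ v, C *ᵥ v = 0 → D *ᵥ v = 0) : C * Cp * D = D := by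
  have hDk : D * (Cp * C) = D := by
    have hz : ∀ v : n → ℝ, (D - D * (Cp * C)) *ᵥ v = 0 := by
      intro v
      have hCv : C *ᵥ ((1 - Cp * C) *ᵥ v) = 0 := by
        rw [Matrix.mulVec_mulVec]
        have hz2 : C * (1 - Cp * C) = 0 := by
          rw [Matrix.mul_sub, Matrix.mul_one, ← Matrix.mul_assoc, hCp.1, sub_self]
        rw [hz2, Matrix.zero_mulVec]
      have hDv := hker _ hCv
      rw [Matrix.mulVec_mulVec, Matrix.mul_sub, Matrix.mul_one] at hDv
      exact hDv
    have : D - D * (Cp * C) = 0 := by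
      ext i j
      have := congrFun (hz (Pi.single j 1)) i
      simpa [Matrix.mulVec_single] using this
    exact (sub_eq_zero.mp this).symm
  have h4 := hCp.2.2.2
  have hcomm := mp_comm hC hCp
  calc C * Cp * D = (Cp * C)ᵀ * D := by rw [h4, hcomm]
  _ = (Dᵀ * (Cp * C))ᵀ := by conv_rhs => rw [Matrix.transpose_mul, Matrix.transpose_transpose]
  _ = D := by rw [hD, hDk, hD]

theorem dot_aux (M N : Matrix n n ℝ) (x y : n → ℝ) :
    (M *ᵥ x) ⬝ᵥ (N *ᵥ y) = x ⬝ᵥ ((Mᵀ * N) *ᵥ y) := by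
  rw [Matrix.dotProduct_mulVec, Matrix.dotProduct_mulVec, ← Matrix.vecMul_vecMul,
    Matrix.vecMul_transpose]

theorem psd_smul {c : ℝ} (hc : 0 ≤ c) {M : Matrix n n ℝ} (h : M.PosSemidef) :
    (c • M).PosSemidef := by
  refine Matrix.PosSemidef.of_dotProduct_mulVec_nonneg ?_ (fun x => ?_)
  · have h1 : Mᵀ = M := by
      have := h.1
      rwa [Matrix.IsHermitian, Matrix.conjTranspose_eq_transpose_of_trivial] at this
    rw [Matrix.IsHermitian, Matrix.conjTranspose_eq_transpose_of_trivial,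
      Matrix.transpose_smul, h1]
  · have := h.dotProduct_mulVec_nonneg x
    simp only [star_trivial] at this ⊢
    rw [Matrix.smul_mulVec, dotProduct_smul, smul_eq_mul]
    exact mul_nonneg hc this

/-- Core lemma: if `C ⪯ c • D`, same kernels, then `c⁻¹ • Dp ⪯ Cp`. -/
theorem core {c : ℝ} (hc : 0 < c) {C D Cp Dp : Matrix n n ℝ}
    (hCpsd : C.PosSemidef) (hD : Dᵀ = D)
    (hker : ∀ v, C *ᵥ v = 0 → D *ᵥ v = 0)
    (hle : (c • D - C).PosSemidef)
    (hCp : IsMoorePenrose C Cp) (hDp : IsMoorePenrose D Dp) :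
    (Cp - c⁻¹ • Dp).PosSemidef := by
  have hC : Cᵀ = C := by
    have := hCpsd.1; simpa [Matrix.IsHermitian] using this
  have hCps : Cpᵀ = Cp := mp_symm hC hCp
  have hDps : Dpᵀ = Dp := mp_symm hD hDp
  -- C * Cp * Dp = Dp
  have habs : C * Cp * Dp = Dp := by
    have h1 : C * Cp * D = D := range_absorb hC hD hCp hker
    have hDd : Dp = D * (Dp * Dp) := by
      calc Dp = Dp * D * Dp := hDp.2.1.symm
      _ = D * Dp * Dp := by rw [← mp_comm hD hDp]
      _ = D * (Dp * Dp) := by rw [Matrix.mul_assoc]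
    calc C * Cp * Dp = C * Cp * (D * (Dp * Dp)) := by rw [← hDd]
    _ = (C * Cp * D) * (Dp * Dp) := by simp [Matrix.mul_assoc]
    _ = D * (Dp * Dp) := by rw [h1]
    _ = Dp := hDd.symm
  have hcomm := mp_comm hC hCp
  refine Matrix.PosSemidef.of_dotProduct_mulVec_nonneg ?_ (fun x => ?_)
  · rw [Matrix.IsHermitian, Matrix.conjTranspose_eq_transpose_of_trivial,
      Matrix.transpose_sub, Matrix.transpose_smul, hCps, hDps]
  ·
    simp only [star_trivial]
    have key1 : 0 ≤ (Cp *ᵥ x - c⁻¹ • (Dp *ᵥ x)) ⬝ᵥ (C *ᵥ (Cp *ᵥ x - c⁻¹ • (Dp *ᵥ x))) :=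
      by simpa only [star_trivial] using hCpsd.dotProduct_mulVec_nonneg (Cp *ᵥ x - c⁻¹ • (Dp *ᵥ x))
    have hCu : (Cp *ᵥ x) ⬝ᵥ (C *ᵥ (Cp *ᵥ x)) = x ⬝ᵥ (Cp *ᵥ x) := by
      rw [Matrix.mulVec_mulVec, dot_aux, hCps, ← Matrix.mul_assoc, hCp.2.1]
    have habs2 : Cp * C * Dp = Dp := by rw [← mp_comm hC hCp]; exact habs
    have habs3 : Dp * (Cp * C) = Dp := by
      have := congrArg Matrix.transpose habs
      simpa [Matrix.transpose_mul, hCps, hDps, hC, Matrix.mul_assoc] using this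
    have hcross : (Cp *ᵥ x) ⬝ᵥ (C *ᵥ (Dp *ᵥ x)) = x ⬝ᵥ (Dp *ᵥ x) := by
      rw [Matrix.mulVec_mulVec, dot_aux, hCps, ← Matrix.mul_assoc, habs2]
    have hcross2 : (Dp *ᵥ x) ⬝ᵥ (C *ᵥ (Cp *ᵥ x)) = x ⬝ᵥ (Dp *ᵥ x) := by
      rw [Matrix.mulVec_mulVec, dot_aux, hDps, hcomm, habs3]
    have hDq : (Dp *ᵥ x) ⬝ᵥ (D *ᵥ (Dp *ᵥ x)) = x ⬝ᵥ (Dp *ᵥ x) := by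
      rw [Matrix.mulVec_mulVec, dot_aux, hDps, ← Matrix.mul_assoc, hDp.2.1]
    have hCq : (Dp *ᵥ x) ⬝ᵥ (C *ᵥ (Dp *ᵥ x)) ≤ c * (x ⬝ᵥ (Dp *ᵥ x)) := by
      have h0 : 0 ≤ (Dp *ᵥ x) ⬝ᵥ ((c • D - C) *ᵥ (Dp *ᵥ x)) := by
        simpa using hle.dotProduct_mulVec_nonneg (Dp *ᵥ x)
      have hexp : (Dp *ᵥ x) ⬝ᵥ ((c • D - C) *ᵥ (Dp *ᵥ x))
          = c * ((Dp *ᵥ x) ⬝ᵥ (D *ᵥ (Dp *ᵥ x))) - (Dp *ᵥ x) ⬝ᵥ (C *ᵥ (Dp *ᵥ x)) := by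
        rw [Matrix.sub_mulVec, dotProduct_sub, Matrix.smul_mulVec, dotProduct_smul,
          smul_eq_mul]
      rw [hexp, hDq] at h0
      linarith
    have expand : (Cp *ᵥ x - c⁻¹ • (Dp *ᵥ x)) ⬝ᵥ (C *ᵥ (Cp *ᵥ x - c⁻¹ • (Dp *ᵥ x)))
        = (Cp *ᵥ x) ⬝ᵥ (C *ᵥ (Cp *ᵥ x)) - c⁻¹ * ((Cp *ᵥ x) ⬝ᵥ (C *ᵥ (Dp *ᵥ x)))
          - c⁻¹ * ((Dp *ᵥ x) ⬝ᵥ (C *ᵥ (Cp *ᵥ x)))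
          + c⁻¹ * (c⁻¹ * ((Dp *ᵥ x) ⬝ᵥ (C *ᵥ (Dp *ᵥ x)))) := by
      rw [Matrix.mulVec_sub, Matrix.mulVec_smul, sub_dotProduct, dotProduct_sub,
        dotProduct_sub, smul_dotProduct, dotProduct_smul, dotProduct_smul, smul_dotProduct]
      simp only [smul_eq_mul]
      ring
    have target : (Cp - c⁻¹ • Dp) *ᵥ x = Cp *ᵥ x - c⁻¹ • (Dp *ᵥ x) := by
      rw [Matrix.sub_mulVec, Matrix.smul_mulVec]
    rw [target, dotProduct_sub, dotProduct_smul, smul_eq_mul]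
    rw [expand, hCu, hcross, hcross2] at key1
    have hcinv : 0 < c⁻¹ := inv_pos.mpr hc
    have hq : c⁻¹ * (c⁻¹ * ((Dp *ᵥ x) ⬝ᵥ (C *ᵥ (Dp *ᵥ x))))
        ≤ c⁻¹ * (c⁻¹ * (c * (x ⬝ᵥ (Dp *ᵥ x)))) := by
      apply mul_le_mul_of_nonneg_left _ (le_of_lt hcinv)
      exact mul_le_mul_of_nonneg_left hCq (le_of_lt hcinv)
    have hsimp : c⁻¹ * (c⁻¹ * (c * (x ⬝ᵥ (Dp *ᵥ x)))) = c⁻¹ * (x ⬝ᵥ (Dp *ᵥ x)) := by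
      field_simp
    rw [hsimp] at hq
    linarith

end MPaux

theorem stmt8 {n : Type*} [Fintype n] [DecidableEq n] (ε : ℝ) (hε : 0 < ε)
    (A B : Matrix n n ℝ) (hA : A.PosSemidef) (hB : B.PosSemidef)
    (hker : ∀ x : n → ℝ, A *ᵥ x = 0 ↔ B *ᵥ x = 0)
    (h : SpecApprox ε A B)
    (Ap : Matrix n n ℝ) (hAp : IsMoorePenrose A Ap)
    (Bp : Matrix n n ℝ) (hBp : IsMoorePenrose B Bp) :
    SpecApprox ε Ap Bp := by
  have hAt : Aᵀ = A := by have := hA.1; simpa [Matrix.IsHermitian] using this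
  have hBt : Bᵀ = B := by have := hB.1; simpa [Matrix.IsHermitian] using this
  have hexp : (0:ℝ) < Real.exp ε := Real.exp_pos ε
  have hinv : (Real.exp ε)⁻¹ = Real.exp (-ε) := by rw [← Real.exp_neg]
  constructor
  · -- Ap - e^{-ε} Bp PSD : from A ⪯ e^ε B
    have := MPaux.core hexp hA hBt (fun v hv => (hker v).mp hv) h.2 hAp hBp
    rwa [hinv] at this
  · -- e^ε Bp - Ap PSD : from B ⪯ e^ε A
    have hle : (Real.exp ε • A - B).PosSemidef := by
      have h1 := MPaux.psd_smul (le_of_lt hexp) h.1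
      have heq : Real.exp ε • (A - Real.exp (-ε) • B) = Real.exp ε • A - B := by
        rw [smul_sub, smul_smul, ← Real.exp_add]
        simp
      rwa [heq] at h1
    have hc := MPaux.core hexp hB hAt (fun v hv => (hker v).mpr hv) hle hBp hAp
    have h2 := MPaux.psd_smul (le_of_lt hexp) hc
    have heq : Real.exp ε • (Bp - (Real.exp ε)⁻¹ • Ap) = Real.exp ε • Bp - Ap := by
      rw [smul_sub, smul_smul, mul_inv_cancel₀ (ne_of_gt hexp), one_smul]
    rwa [heq] at h2
end

section
/- Deletion and contraction commute with Schur complements: for a graph G with vertex partition V₁, V₂ and an edge e with both endpoints in V₁, Schur(G \ e, V₁) = Schur(G, V₁) \ e and Schur(G / e, V₁) = Schur(G, V₁) / e. -/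
open Matrix

/-- The matrix realizing contraction of the edge `(a,b)` (identifying `b` with `a`). -/
def contractMat {V : Type*} [Fintype V] [DecidableEq V] (a b : V) :
    Matrix V {x : V // x ≠ b} ℝ :=
  Matrix.of fun i j => if i = ↑j ∨ (i = b ∧ (j : V) = a) then 1 else 0

private lemma sum_indic {I W : Type*} [Fintype I] [DecidableEq I] [DecidableEq W]
    (f : I → W) (hf : Function.Injective f) (v : I → ℝ) (i₀ ib : I)
    (h : f i₀ ≠ f ib) (c : Prop) [Decidable c] :
    ∑ i, (if f i = f i₀ ∨ (f i = f ib ∧ c) then (1:ℝ) else 0) * v i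
      = v i₀ + if c then v ib else 0 := by
  have hne : i₀ ≠ ib := fun hh => h (hh ▸ rfl)
  by_cases hc : c
  · have step : ∀ i, (if f i = f i₀ ∨ (f i = f ib ∧ c) then (1:ℝ) else 0) * v i
        = (if i = i₀ then v i else 0) + (if i = ib then v i else 0) := by
      intro i
      by_cases h1 : i = i₀
      · subst h1
        rw [if_pos (Or.inl rfl), if_pos rfl, if_neg hne, one_mul, add_zero]
      · by_cases h2 : i = ib
        · subst h2
          rw [if_pos (Or.inr ⟨rfl, hc⟩), if_neg h1, if_pos rfl, one_mul, zero_add]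
        · rw [if_neg, if_neg h1, if_neg h2, zero_mul, add_zero]
          rintro (hh | ⟨hh, -⟩)
          · exact h1 (hf hh)
          · exact h2 (hf hh)
    rw [Finset.sum_congr rfl fun i _ => step i, Finset.sum_add_distrib]
    simp [hc]
  · have step : ∀ i, (if f i = f i₀ ∨ (f i = f ib ∧ c) then (1:ℝ) else 0) * v i
        = (if i = i₀ then v i else 0) := by
      intro i
      by_cases h1 : i = i₀
      · subst h1; rw [if_pos (Or.inl rfl), if_pos rfl, one_mul]
      · rw [if_neg, if_neg h1, zero_mul]
        rintro (hh | ⟨-, hh⟩)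
        · exact h1 (hf hh)
        · exact hc hh
    rw [Finset.sum_congr rfl fun i _ => step i]
    simp [hc]

private lemma keyCsum {V : Type*} [Fintype V] [DecidableEq V] (a b : V)
    (v : V → ℝ) (x : {x : V // x ≠ b}) :
    (∑ i, contractMat a b i x * v i) = v ↑x + if (↑x : V) = a then v b else 0 := by
  have := sum_indic (fun i : V => i) (fun _ _ h => h) v ↑x b x.2 ((↑x : V) = a)
  simpa [contractMat] using this

private lemma keyCL {V : Type*} [Fintype V] [DecidableEq V] {β : Type*} (a b : V)
    (N : Matrix V β ℝ) (x : {x : V // x ≠ b}) (z : β) :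
    ((contractMat a b)ᵀ * N) x z = N ↑x z + if (↑x : V) = a then N b z else 0 := by
  rw [Matrix.mul_apply]
  simp only [Matrix.transpose_apply]
  exact keyCsum a b (fun i => N i z) x

private lemma keyCR {V : Type*} [Fintype V] [DecidableEq V] {β : Type*} [Fintype β] (a b : V)
    (N : Matrix β V ℝ) (z : β) (y : {x : V // x ≠ b}) :
    (N * contractMat a b) z y = N z ↑y + if (↑y : V) = a then N z b else 0 := by
  rw [Matrix.mul_apply, Finset.sum_congr rfl fun j _ => mul_comm _ _]
  exact keyCsum a b (fun j => N z j) y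

private lemma keyPsum {V : Type*} [Fintype V] [DecidableEq V] (p : V → Prop) [DecidablePred p]
    (a b : V) (hb : p b) (v : {i : V // p i} → ℝ) (x : {x : {x : V // x ≠ b} // p ↑x}) :
    (∑ u, (Matrix.of fun (i : {i : V // p i}) (j : {x : {x : V // x ≠ b} // p ↑x}) =>
        if (↑i : V) = ↑↑j ∨ ((↑i : V) = b ∧ (↑↑j : V) = a) then (1:ℝ) else 0) u x * v u)
      = v ⟨↑↑x, x.2⟩ + if (↑↑x : V) = a then v ⟨b, hb⟩ else 0 := by
  have := sum_indic (Subtype.val : {i : V // p i} → V) Subtype.val_injective v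
    ⟨↑↑x, x.2⟩ ⟨b, hb⟩ x.1.2 ((↑↑x : V) = a)
  simpa using this

private lemma keyPL {V : Type*} [Fintype V] [DecidableEq V] (p : V → Prop) [DecidablePred p]
    {β : Type*} (a b : V) (hb : p b)
    (N : Matrix {i : V // p i} β ℝ) (x : {x : {x : V // x ≠ b} // p ↑x}) (z : β) :
    ((Matrix.of fun (i : {i : V // p i}) (j : {x : {x : V // x ≠ b} // p ↑x}) =>
        if (↑i : V) = ↑↑j ∨ ((↑i : V) = b ∧ (↑↑j : V) = a) then (1:ℝ) else 0)ᵀ * N) x z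
      = N ⟨↑↑x, x.2⟩ z + if (↑↑x : V) = a then N ⟨b, hb⟩ z else 0 := by
  rw [Matrix.mul_apply]
  simp only [Matrix.transpose_apply]
  exact keyPsum p a b hb (fun u => N u z) x

private lemma keyPR {V : Type*} [Fintype V] [DecidableEq V] (p : V → Prop) [DecidablePred p]
    {β : Type*} [Fintype β] (a b : V) (hb : p b)
    (N : Matrix β {i : V // p i} ℝ) (z : β) (y : {x : {x : V // x ≠ b} // p ↑x}) :
    (N * Matrix.of fun (i : {i : V // p i}) (j : {x : {x : V // x ≠ b} // p ↑x}) =>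
        if (↑i : V) = ↑↑j ∨ ((↑i : V) = b ∧ (↑↑j : V) = a) then (1:ℝ) else 0) z y
      = N z ⟨↑↑y, y.2⟩ + if (↑↑y : V) = a then N z ⟨b, hb⟩ else 0 := by
  rw [Matrix.mul_apply, Finset.sum_congr rfl fun w _ => mul_comm _ _]
  exact keyPsum p a b hb (fun w => N z w) y


theorem stmt17 {V : Type*} [Fintype V] [DecidableEq V]
    (L : Matrix V V ℝ) (hL : L.PosSemidef)
    (p : V → Prop) [DecidablePred p]
    (hFF : IsUnit (L.submatrix (Subtype.val : {i // ¬ p i} → V)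
      (Subtype.val : {i // ¬ p i} → V)).det)
    (a b : V) (hab : a ≠ b) (ha : p a) (hb : p b)
    (w₀ : ℝ)
    (bv : V → ℝ) (hbv : bv = fun i => if i = a then 1 else if i = b then -1 else 0) :
    -- deletion commutes with taking the Schur complement
    (schurOn (L - w₀ • Matrix.of fun i j => bv i * bv j) p =
        schurOn L p - w₀ • Matrix.of fun i j : {i // p i} => bv ↑i * bv ↑j) ∧
    -- contraction commutes with taking the Schur complement
    schurOn ((contractMat a b)ᵀ * L * contractMat a b) (fun x : {x : V // x ≠ b} => p ↑x) =
      (Matrix.of fun (i : {i : V // p i}) (j : {x : {x : V // x ≠ b} // p ↑x}) =>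
          if (↑i : V) = ↑↑j ∨ ((↑i : V) = b ∧ (↑↑j : V) = a) then (1 : ℝ) else 0)ᵀ *
        schurOn L p *
        (Matrix.of fun (i : {i : V // p i}) (j : {x : {x : V // x ≠ b} // p ↑x}) =>
          if (↑i : V) = ↑↑j ∨ ((↑i : V) = b ∧ (↑↑j : V) = a) then (1 : ℝ) else 0) := by
  constructor
  · -- deletion
    have hbv0 : ∀ i : {i // ¬ p i}, bv ↑i = 0 := by
      rintro ⟨i, hi⟩
      have h1 : i ≠ a := fun h => hi (by rw [h]; exact ha)
      have h2 : i ≠ b := fun h => hi (by rw [h]; exact hb)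
      simp [hbv, h1, h2]
    have hTT : (L - w₀ • Matrix.of fun i j => bv i * bv j).submatrix
        (Subtype.val : {i // p i} → V) (Subtype.val : {i // p i} → V)
        = L.submatrix Subtype.val Subtype.val -
          w₀ • Matrix.of fun i j : {i // p i} => bv ↑i * bv ↑j := by
      ext i j; simp
    have hTF : (L - w₀ • Matrix.of fun i j => bv i * bv j).submatrix
        (Subtype.val : {i // p i} → V) (Subtype.val : {i // ¬ p i} → V)
        = L.submatrix Subtype.val Subtype.val := by
      ext i j; simp [hbv0 j]
    have hFT : (L - w₀ • Matrix.of fun i j => bv i * bv j).submatrix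
        (Subtype.val : {i // ¬ p i} → V) (Subtype.val : {i // p i} → V)
        = L.submatrix Subtype.val Subtype.val := by
      ext i j; simp [hbv0 i]
    have hFF : (L - w₀ • Matrix.of fun i j => bv i * bv j).submatrix
        (Subtype.val : {i // ¬ p i} → V) (Subtype.val : {i // ¬ p i} → V)
        = L.submatrix Subtype.val Subtype.val := by
      ext i j; simp [hbv0 i]
    unfold schurOn
    rw [hTT, hTF, hFT, hFF, sub_right_comm]
  · -- contraction
    have hAent : ∀ x y : {x : V // x ≠ b},
        ((contractMat a b)ᵀ * L * contractMat a b) x y =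
          (L ↑x ↑y + (if (↑x : V) = a then L b ↑y else 0)) +
          (if (↑y : V) = a then L ↑x b + (if (↑x : V) = a then L b b else 0) else 0) := by
      intro x y
      rw [keyCR, keyCL, keyCL]
    have hbF : ∀ i : V, ¬ p i → i ≠ b := fun i hi h => hi (by rw [h]; exact hb)
    have haF : ∀ i : V, ¬ p i → i ≠ a := fun i hi h => hi (by rw [h]; exact ha)
    let eF : {x : {x : V // x ≠ b} // ¬ p ↑x} ≃ {i : V // ¬ p i} :=
      { toFun := fun j => ⟨↑↑j, j.2⟩
        invFun := fun i => ⟨⟨↑i, hbF ↑i i.2⟩, i.2⟩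
        left_inv := fun j => rfl
        right_inv := fun i => rfl }
    have hTT : ((contractMat a b)ᵀ * L * contractMat a b).submatrix
        (Subtype.val : {x : {x : V // x ≠ b} // p ↑x} → {x : V // x ≠ b})
        (Subtype.val : {x : {x : V // x ≠ b} // p ↑x} → {x : V // x ≠ b})
        = (Matrix.of fun (i : {i : V // p i}) (j : {x : {x : V // x ≠ b} // p ↑x}) =>
            if (↑i : V) = ↑↑j ∨ ((↑i : V) = b ∧ (↑↑j : V) = a) then (1 : ℝ) else 0)ᵀ
          * L.submatrix (Subtype.val : {i : V // p i} → V) (Subtype.val : {i : V // p i} → V)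
          * (Matrix.of fun (i : {i : V // p i}) (j : {x : {x : V // x ≠ b} // p ↑x}) =>
            if (↑i : V) = ↑↑j ∨ ((↑i : V) = b ∧ (↑↑j : V) = a) then (1 : ℝ) else 0) := by
      ext x y
      rw [Matrix.submatrix_apply, hAent, keyPR p a b hb, keyPL p a b hb, keyPL p a b hb]
      rfl
    have hTF : ((contractMat a b)ᵀ * L * contractMat a b).submatrix
        (Subtype.val : {x : {x : V // x ≠ b} // p ↑x} → {x : V // x ≠ b})
        (Subtype.val : {x : {x : V // x ≠ b} // ¬ p ↑x} → {x : V // x ≠ b})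
        = ((Matrix.of fun (i : {i : V // p i}) (j : {x : {x : V // x ≠ b} // p ↑x}) =>
            if (↑i : V) = ↑↑j ∨ ((↑i : V) = b ∧ (↑↑j : V) = a) then (1 : ℝ) else 0)ᵀ
          * L.submatrix (Subtype.val : {i : V // p i} → V)
            (Subtype.val : {i : V // ¬ p i} → V)).submatrix id ⇑eF := by
      ext x j
      rw [Matrix.submatrix_apply, hAent, Matrix.submatrix_apply, keyPL p a b hb]
      simp [eF, haF _ j.2]
    have hFT : ((contractMat a b)ᵀ * L * contractMat a b).submatrix
        (Subtype.val : {x : {x : V // x ≠ b} // ¬ p ↑x} → {x : V // x ≠ b})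
        (Subtype.val : {x : {x : V // x ≠ b} // p ↑x} → {x : V // x ≠ b})
        = (L.submatrix (Subtype.val : {i : V // ¬ p i} → V)
            (Subtype.val : {i : V // p i} → V)).submatrix ⇑eF id
          * (Matrix.of fun (i : {i : V // p i}) (j : {x : {x : V // x ≠ b} // p ↑x}) =>
            if (↑i : V) = ↑↑j ∨ ((↑i : V) = b ∧ (↑↑j : V) = a) then (1 : ℝ) else 0) := by
      ext j y
      rw [Matrix.submatrix_apply, hAent, keyPR p a b hb]
      simp [eF, haF _ j.2]
    have hFF : ((contractMat a b)ᵀ * L * contractMat a b).submatrix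
        (Subtype.val : {x : {x : V // x ≠ b} // ¬ p ↑x} → {x : V // x ≠ b})
        (Subtype.val : {x : {x : V // x ≠ b} // ¬ p ↑x} → {x : V // x ≠ b})
        = (L.submatrix (Subtype.val : {i : V // ¬ p i} → V)
            (Subtype.val : {i : V // ¬ p i} → V)).submatrix ⇑eF ⇑eF := by
      ext j k
      rw [Matrix.submatrix_apply, hAent]
      simp [eF, haF _ j.2, haF _ k.2]
    unfold schurOn
    rw [hTT, hTF, hFT, hFF, Matrix.inv_submatrix_equiv, Matrix.submatrix_mul_equiv,
      ← Matrix.mul_assoc, Matrix.submatrix_mul_equiv, Matrix.submatrix_id_id]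
    simp only [Matrix.mul_sub, Matrix.sub_mul, Matrix.mul_assoc]
end

section
/- For a graph G with vertex partition V₁, V₂, the leverage score of any edge e with both endpoints in V₁ is the same in G as in the graph Schur(G, V₁). -/
open Matrix

set_option linter.unusedSectionVars false

section Aux
variable {V : Type*} [Fintype V] [DecidableEq V]

lemma lapW_mulVec (w : V → V → ℝ) (hdiag : ∀ i, w i i = 0) (x : V → ℝ) (i : V) :
    (lapW w *ᵥ x) i = ∑ j, (w i j * x i - w i j * x j) := by
  have : ∀ j, lapW w i j * x j
      = (if j = i then (∑ k, w i k) * x i else 0) - w i j * x j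
        + (if j = i then w i i * x i else 0) := by
    intro j
    rcases eq_or_ne j i with rfl | h
    · simp [lapW, hdiag]
    · simp [lapW, h, Ne.symm h]
  simp only [mulVec, dotProduct, this]
  rw [Finset.sum_add_distrib, Finset.sum_sub_distrib]
  simp [Finset.sum_ite_eq', hdiag, Finset.sum_sub_distrib, Finset.mul_sum, Finset.sum_mul]

lemma quad_eq (w : V → V → ℝ) (hsymm : ∀ i j, w i j = w j i) (hdiag : ∀ i, w i i = 0)
    (x : V → ℝ) :
    ∑ i, ∑ j, w i j * (x i - x j) ^ 2 = 2 * (x ⬝ᵥ lapW w *ᵥ x) := by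
  have hS : x ⬝ᵥ lapW w *ᵥ x = ∑ i, ∑ j, w i j * (x i * (x i - x j)) := by
    simp only [dotProduct, lapW_mulVec w hdiag, Finset.mul_sum]
    refine Finset.sum_congr rfl fun i _ => Finset.sum_congr rfl fun j _ => by ring
  have hswap : ∑ i, ∑ j, w i j * (x j * (x i - x j))
      = - ∑ i, ∑ j, w i j * (x i * (x i - x j)) := by
    rw [Finset.sum_comm, ← Finset.sum_neg_distrib]
    refine Finset.sum_congr rfl fun j _ => ?_
    rw [← Finset.sum_neg_distrib]
    refine Finset.sum_congr rfl fun i _ => ?_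
    rw [hsymm j i]; ring
  have : ∑ i, ∑ j, w i j * (x i - x j) ^ 2
      = ∑ i, ∑ j, w i j * (x i * (x i - x j)) - ∑ i, ∑ j, w i j * (x j * (x i - x j)) := by
    rw [← Finset.sum_sub_distrib]
    refine Finset.sum_congr rfl fun i _ => ?_
    rw [← Finset.sum_sub_distrib]
    refine Finset.sum_congr rfl fun j _ => by ring
  rw [this, hswap, hS]; ring

lemma exists_sol (M : Matrix V V ℝ) (b : V → ℝ)
    (h : ∀ x : V → ℝ, x ⬝ᵥ M *ᵥ x = 0 → b ⬝ᵥ x = 0) : ∃ y, M *ᵥ y = b := by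
  let T := Matrix.toEuclideanLin M
  have hmem : ((WithLp.equiv 2 (V → ℝ)).symm b) ∈ (LinearMap.range T)ᗮᗮ := by
    rw [Submodule.mem_orthogonal]
    intro x hx
    rw [Submodule.mem_orthogonal] at hx
    have h1 : inner ℝ (T x) x = (0:ℝ) := hx (T x) ⟨x, rfl⟩
    have h2 : (WithLp.equiv 2 (V → ℝ) x) ⬝ᵥ M *ᵥ (WithLp.equiv 2 (V → ℝ) x) = 0 := by
      rw [← h1, Matrix.toEuclideanLin_apply]
      simp [PiLp.inner_apply, dotProduct, mul_comm]
    have := h _ h2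
    rw [PiLp.inner_apply]
    simpa [dotProduct, mul_comm] using this
  rw [Submodule.orthogonal_orthogonal] at hmem
  obtain ⟨y, hy⟩ := hmem
  refine ⟨WithLp.equiv 2 (V → ℝ) y, ?_⟩
  have := congrArg (WithLp.equiv 2 (V → ℝ)) hy
  exact this

lemma mp_quad {n : Type*} [Fintype n] [DecidableEq n] (M P : Matrix n n ℝ)
    (hM : Mᵀ = M) (hMPM : M * P * M = M) (y : n → ℝ) :
    (M *ᵥ y) ⬝ᵥ P *ᵥ (M *ᵥ y) = (M *ᵥ y) ⬝ᵥ y := by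
  have h1 : M *ᵥ y = y ᵥ* M := by
    conv_lhs => rw [← hM]
    exact Matrix.mulVec_transpose M y
  calc (M *ᵥ y) ⬝ᵥ P *ᵥ (M *ᵥ y)
      = ((M *ᵥ y) ᵥ* P) ⬝ᵥ (M *ᵥ y) := Matrix.dotProduct_mulVec _ _ _
    _ = (((M *ᵥ y) ᵥ* P) ᵥ* M) ⬝ᵥ y := Matrix.dotProduct_mulVec _ _ _
    _ = (y ᵥ* (M * P * M)) ⬝ᵥ y := by rw [h1]; simp [Matrix.vecMul_vecMul]
    _ = (y ᵥ* M) ⬝ᵥ y := by rw [hMPM]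
    _ = (M *ᵥ y) ⬝ᵥ y := by rw [h1]

lemma const_of_edge (w : V → V → ℝ)
    (hconn : (SimpleGraph.fromRel fun i j => w i j ≠ 0).Connected)
    (x : V → ℝ) (hedge : ∀ i j, w i j ≠ 0 → x i = x j) (i j : V) : x i = x j := by
  obtain ⟨W⟩ := hconn.preconnected i j
  induction W with
  | nil => rfl
  | cons h p' ih =>
    obtain ⟨hne, hw | hw⟩ := (SimpleGraph.fromRel_adj _ _ _).mp h
    · exact (hedge _ _ hw).trans ih
    · exact ((hedge _ _ hw).symm).trans ih

end Aux

theorem stmt18 {V : Type*} [Fintype V] [DecidableEq V] (w : V → V → ℝ)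
    (hsymm : ∀ i j, w i j = w j i) (hnn : ∀ i j, 0 ≤ w i j) (hdiag : ∀ i, w i i = 0)
    (hconn : (SimpleGraph.fromRel fun i j => w i j ≠ 0).Connected)
    (p : V → Prop) [DecidablePred p]
    (hFF : IsUnit ((lapW w).submatrix (Subtype.val : {i // ¬ p i} → V)
      (Subtype.val : {i // ¬ p i} → V)).det)
    (u v : V) (huv : u ≠ v) (hu : p u) (hv : p v)
    (b : V → ℝ) (hb : b = fun i => if i = u then 1 else if i = v then -1 else 0)
    (Lp : Matrix V V ℝ) (hLp : IsMoorePenrose (lapW w) Lp)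
    (Sp : Matrix {i // p i} {i // p i} ℝ) (hSp : IsMoorePenrose (schurOn (lapW w) p) Sp) :
    w u v * (b ⬝ᵥ Lp *ᵥ b) =
      w u v * ((fun i : {i // p i} => b ↑i) ⬝ᵥ Sp *ᵥ (fun i : {i // p i} => b ↑i)) := by
  set L := lapW w with hL
  have hLs : Lᵀ = L := lapW_transpose w hsymm
  -- b vanishes off p
  have hb0 : ∀ j : V, ¬ p j → b j = 0 := by
    intro j hj
    have h1 : j ≠ u := fun h => hj (h ▸ hu)
    have h2 : j ≠ v := fun h => hj (h ▸ hv)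
    simp [hb, h1, h2]
  have hbdot : ∀ x : V → ℝ, b ⬝ᵥ x = x u - x v := by
    intro x
    have key : ∀ i, b i * x i = (if i = u then x i else 0) + (if i = v then -x i else 0) := by
      intro i
      rcases eq_or_ne i u with rfl | h1
      · simp [hb, huv.symm]
        intro h; exact absurd h huv
      · rcases eq_or_ne i v with rfl | h2
        · simp [hb, h1]
        · simp [hb, h1, h2]
    simp only [dotProduct, key, Finset.sum_add_distrib, Finset.sum_ite_eq',
      Finset.mem_univ, if_true]
    ring
  -- existence of y with L y = b
  obtain ⟨y, hy⟩ : ∃ y, L *ᵥ y = b := by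
    apply exists_sol
    intro x hx
    have hzero : ∑ i, ∑ j, w i j * (x i - x j) ^ 2 = 0 := by
      rw [quad_eq w hsymm hdiag x, hx]; ring
    have hterm : ∀ i j, w i j * (x i - x j) ^ 2 = 0 := by
      have h1 := (Finset.sum_eq_zero_iff_of_nonneg (fun i _ =>
        Finset.sum_nonneg fun j _ => mul_nonneg (hnn i j) (sq_nonneg _))).mp hzero
      intro i j
      exact (Finset.sum_eq_zero_iff_of_nonneg (fun j _ =>
        mul_nonneg (hnn i j) (sq_nonneg _))).mp (h1 i (Finset.mem_univ i)) j (Finset.mem_univ j)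
    have hedge : ∀ i j, w i j ≠ 0 → x i = x j := by
      intro i j hw
      have h2 : (x i - x j) ^ 2 = 0 := by
        rcases mul_eq_zero.mp (hterm i j) with h | h
        · exact absurd h hw
        · exact h
      have h3 := pow_eq_zero_iff (n := 2) (by norm_num) |>.mp h2
      linarith [sub_eq_zero.mp h3]
    rw [hbdot x, const_of_edge w hconn x hedge u v, sub_self]
  -- the two block matrices
  set A := L.submatrix (Subtype.val : {i // p i} → V) (Subtype.val : {i // p i} → V) with hA
  set B := L.submatrix (Subtype.val : {i // p i} → V) (Subtype.val : {i // ¬ p i} → V) with hB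
  set Bt := L.submatrix (Subtype.val : {i // ¬ p i} → V) (Subtype.val : {i // p i} → V) with hBt
  set F := L.submatrix (Subtype.val : {i // ¬ p i} → V) (Subtype.val : {i // ¬ p i} → V) with hF
  set y1 : {i // p i} → ℝ := fun i => y i.val with hy1
  set y2 : {i // ¬ p i} → ℝ := fun i => y i.val with hy2
  set b1 : {i // p i} → ℝ := fun i => b i.val with hb1
  -- block equations
  have hblock : ∀ i : V, (∑ j : {j // p j}, L i j.val * y j.val)
      + (∑ j : {j // ¬ p j}, L i j.val * y j.val) = b i := by
    intro i
    rw [Fintype.sum_subtype_add_sum_subtype p (fun j => L i j * y j)]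
    exact congrFun hy i
  have heq1 : A *ᵥ y1 + B *ᵥ y2 = b1 := by
    funext i
    exact hblock i.val
  have heq2 : Bt *ᵥ y1 + F *ᵥ y2 = 0 := by
    funext i
    have := hblock i.val
    rw [hb0 i.val i.prop] at this
    exact this
  have hFinv : F⁻¹ * F = 1 := Matrix.nonsing_inv_mul F hFF
  have hSy : schurOn L p *ᵥ y1 = b1 := by
    have h1 : Bt *ᵥ y1 = -(F *ᵥ y2) := by
      have := heq2
      rw [add_eq_zero_iff_eq_neg] at this
      exact this
    rw [schurOn, Matrix.sub_mulVec]
    rw [← Matrix.mulVec_mulVec, ← Matrix.mulVec_mulVec, h1, Matrix.mulVec_neg,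
      Matrix.mulVec_mulVec, hFinv, Matrix.one_mulVec, Matrix.mulVec_neg]
    rw [sub_neg_eq_add]
    exact heq1
  -- symmetry of Schur complement
  have hSs : (schurOn L p)ᵀ = schurOn L p := by
    rw [schurOn]
    rw [Matrix.transpose_sub, Matrix.transpose_mul, Matrix.transpose_mul,
      Matrix.transpose_nonsing_inv]
    simp only [Matrix.transpose_submatrix, hLs]
    rw [Matrix.mul_assoc]
  -- compute both sides
  have hLHS : b ⬝ᵥ Lp *ᵥ b = b1 ⬝ᵥ y1 := by
    rw [← hy, mp_quad L Lp hLs hLp.1, hy]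
    rw [hbdot y]
    have : b1 ⬝ᵥ y1 = y u - y v := by
      have key : ∀ i : {i // p i}, b1 i * y1 i
          = (if i = (⟨u, hu⟩ : {i // p i}) then y1 i else 0)
            + (if i = (⟨v, hv⟩ : {i // p i}) then -y1 i else 0) := by
        intro i
        rcases eq_or_ne i ⟨u, hu⟩ with rfl | h1
        · simp [hb1, hb, huv]
        · rcases eq_or_ne i ⟨v, hv⟩ with rfl | h2
          · simp [hb1, hb, Ne.symm huv, h1]
          · have h1' : (i : V) ≠ u := fun h => h1 (Subtype.ext h)
            have h2' : (i : V) ≠ v := fun h => h2 (Subtype.ext h)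
            simp [hb1, hb, h1', h2', h1, h2]
      simp only [dotProduct, key, Finset.sum_add_distrib, Finset.sum_ite_eq',
        Finset.mem_univ, if_true]
      ring
    rw [this]
  have hRHS : b1 ⬝ᵥ Sp *ᵥ b1 = b1 ⬝ᵥ y1 := by
    rw [← hSy, mp_quad (schurOn L p) Sp hSs hSp.1, hSy]
  rw [hLHS, hRHS]
end
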